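/- Let α ∈ (1/2, 1) and λ > 2α/(1 − α). Let g : [0, ∞) → [0, ∞) be measurable and bounded, and suppose there exist constants K > 0 and T > 0 such that g(τ)^2 ≤ K τ^{−2λ} for all τ ≥ T. Then ∫_0^t (t − τ)^{α−1} g(τ) dτ → 0 as t → ∞. -/

import Mathlib

open MeasureTheory intervalIntegral Real Filter

/-- If `g : [0,∞) → [0,∞)` is measurable, bounded, and `g(τ)² ≤ K τ^(−2l)` for `τ ≥ T`
with `l > 2α/(1−α)`, then `∫_0^t (t − τ)^(α−1) g(τ) dτ → 0` as `t → ∞`. -/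
theorem drift_integral_tendsto_zero (α l : ℝ) (hα : α ∈ Set.Ioo (1 / 2 : ℝ) 1)
    (hl : 2 * α / (1 - α) < l)
    (g : ℝ → ℝ) (hmeas : Measurable g)
    (hnonneg : ∀ τ : ℝ, 0 ≤ τ → 0 ≤ g τ)
    (hbdd : ∃ M : ℝ, ∀ τ : ℝ, 0 ≤ τ → g τ ≤ M)
    (K T : ℝ) (hK : 0 < K) (hT : 0 < T)
    (hdecay : ∀ τ : ℝ, T ≤ τ → g τ ^ 2 ≤ K * τ ^ (-(2 * l))) :
    Filter.Tendsto (fun t : ℝ => ∫ τ in (0:ℝ)..t, (t - τ) ^ (α - 1) * g τ)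
      Filter.atTop (nhds 0) := by
  obtain ⟨hα1, hα2⟩ := hα
  have hα0 : 0 < α := by linarith
  have h1α : 0 < 1 - α := by linarith
  -- l > 2
  have hl2 : 2 < l := by
    have : (2 : ℝ) < 2 * α / (1 - α) := by
      rw [lt_div_iff₀ h1α]; nlinarith
    linarith
  obtain ⟨M, hM⟩ := hbdd
  set M' : ℝ := max M 0 with hM'def
  have hM'0 : 0 ≤ M' := le_max_right _ _
  have hM' : ∀ τ : ℝ, 0 ≤ τ → g τ ≤ M' := fun τ hτ => (hM τ hτ).trans (le_max_left _ _)
  set sK : ℝ := Real.sqrt K with hsKdef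
  have hsK0 : 0 ≤ sK := Real.sqrt_nonneg _
  -- pointwise decay: g τ ≤ sK * τ^(-l) for τ ≥ T
  have hgdec : ∀ τ : ℝ, T ≤ τ → g τ ≤ sK * τ ^ (-l) := by
    intro τ hτ
    have hτ0 : 0 < τ := lt_of_lt_of_le hT hτ
    have h1 : τ ^ (-(2 * l)) = (τ ^ (-l)) ^ (2 : ℕ) := by
      rw [← Real.rpow_natCast (τ ^ (-l)) 2, ← Real.rpow_mul hτ0.le]
      ring_nf
    have h2 : g τ ^ 2 ≤ (sK * τ ^ (-l)) ^ 2 := by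
      have := hdecay τ hτ
      rw [h1] at this
      calc g τ ^ 2 ≤ K * (τ ^ (-l)) ^ 2 := this
        _ = (sK * τ ^ (-l)) ^ 2 := by
            rw [mul_pow, Real.sq_sqrt hK.le]
    have hgτ : 0 ≤ g τ := hnonneg τ hτ0.le
    have hb : 0 ≤ sK * τ ^ (-l) := mul_nonneg hsK0 (Real.rpow_nonneg hτ0.le _)
    nlinarith
  -- interval integrability of g on [a,b] ⊆ [0,∞)
  have hgInt : ∀ a b : ℝ, 0 ≤ a → a ≤ b → IntervalIntegrable g volume a b := by
    intro a b ha hab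
    rw [intervalIntegrable_iff_integrableOn_Ioc_of_le hab]
    apply (integrableOn_const (C := M') measure_Ioc_lt_top.ne).mono'
      hmeas.aestronglyMeasurable
    · filter_upwards [ae_restrict_mem measurableSet_Ioc] with x hx
      rw [Real.norm_eq_abs, abs_of_nonneg (hnonneg x (ha.trans hx.1.le))]
      exact hM' x (ha.trans hx.1.le)
  -- kernel integrability
  have hker : ∀ t : ℝ, IntervalIntegrable (fun τ => (t - τ) ^ (α - 1)) volume 0 t := by
    intro t
    have h := (intervalIntegrable_rpow' (a := 0) (b := t) (r := α - 1)
      (by linarith)).comp_sub_left t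
    simpa using h.symm
  -- integrability of the full integrand on subintervals of [0,t]
  have hInt : ∀ t a b : ℝ, 0 ≤ a → a ≤ b → b ≤ t →
      IntervalIntegrable (fun τ => (t - τ) ^ (α - 1) * g τ) volume a b := by
    intro t a b ha hab hbt
    rw [intervalIntegrable_iff_integrableOn_Ioc_of_le hab]
    have hdom : IntegrableOn (fun τ => M' * (t - τ) ^ (α - 1)) (Set.Ioc a b) volume := by
      have := ((hker t).mono_set (by
        rw [Set.uIcc_of_le hab, Set.uIcc_of_le (ha.trans (hab.trans hbt))]
        exact Set.Icc_subset_Icc ha hbt)).const_mul M'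
      rwa [intervalIntegrable_iff_integrableOn_Ioc_of_le hab] at this
    have hmk : Measurable fun τ : ℝ => (t - τ) ^ (α - 1) := by fun_prop
    apply hdom.mono' (hmk.mul hmeas).aestronglyMeasurable
    filter_upwards [ae_restrict_mem measurableSet_Ioc] with x hx
    have hx0 : 0 ≤ x := ha.trans hx.1.le
    have hker0 : 0 ≤ (t - x) ^ (α - 1) := Real.rpow_nonneg (by linarith [hx.2.trans hbt]) _
    rw [Real.norm_eq_abs, Pi.mul_apply, abs_of_nonneg (mul_nonneg hker0 (hnonneg x hx0))]
    calc (t - x) ^ (α - 1) * g x ≤ (t - x) ^ (α - 1) * M' :=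
          mul_le_mul_of_nonneg_left (hM' x hx0) hker0
      _ = M' * (t - x) ^ (α - 1) := mul_comm _ _
  -- the constant C1
  set C1 : ℝ := M' * T + sK * T ^ (1 - l) / (l - 1) with hC1def
  -- the dominating function
  set B : ℝ → ℝ := fun t => (t / 2) ^ (α - 1) * C1 + sK / α * (t / 2) ^ (α - l) with hBdef
  have hBtend : Tendsto B atTop (nhds 0) := by
    have ht2 : Tendsto (fun t : ℝ => t / 2) atTop atTop :=
      Filter.tendsto_id.atTop_div_const (by norm_num)
    have h1 : Tendsto (fun t : ℝ => (t / 2) ^ (α - 1)) atTop (nhds 0) := by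
      have := (tendsto_rpow_neg_atTop h1α).comp ht2
      simpa [Function.comp_def, neg_sub] using this
    have h2 : Tendsto (fun t : ℝ => (t / 2) ^ (α - l)) atTop (nhds 0) := by
      have := (tendsto_rpow_neg_atTop (by linarith : (0:ℝ) < l - α)).comp ht2
      simpa [Function.comp_def, neg_sub] using this
    have := (h1.mul_const C1).add (h2.const_mul (sK / α))
    simpa using this
  -- lower bound: the integral is eventually nonneg
  have hlow : ∀ᶠ t in atTop, 0 ≤ ∫ τ in (0:ℝ)..t, (t - τ) ^ (α - 1) * g τ := by
    filter_upwards [eventually_ge_atTop (0:ℝ)] with t ht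
    apply intervalIntegral.integral_nonneg ht
    intro u hu
    exact mul_nonneg (Real.rpow_nonneg (by linarith [hu.2]) _) (hnonneg u hu.1)
  -- upper bound
  have hup : ∀ᶠ t in atTop, (∫ τ in (0:ℝ)..t, (t - τ) ^ (α - 1) * g τ) ≤ B t := by
    filter_upwards [eventually_ge_atTop (2 * T)] with t ht
    set s : ℝ := t / 2 with hsdef
    have hsT : T ≤ s := by rw [hsdef]; linarith
    have hs0 : 0 < s := lt_of_lt_of_le hT hsT
    have hst : s ≤ t := by rw [hsdef]; linarith
    have ht0 : 0 < t := by linarith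
    have hts : t - s = s := by rw [hsdef]; ring
    -- split the integral
    have hsplit : (∫ τ in (0:ℝ)..t, (t - τ) ^ (α - 1) * g τ) =
        (∫ τ in (0:ℝ)..s, (t - τ) ^ (α - 1) * g τ) +
        ∫ τ in s..t, (t - τ) ^ (α - 1) * g τ :=
      (intervalIntegral.integral_add_adjacent_intervals
        (hInt t 0 s le_rfl hs0.le hst) (hInt t s t hs0.le hst le_rfl)).symm
    rw [hsplit]
    -- bound the first piece
    have hb1 : (∫ τ in (0:ℝ)..s, (t - τ) ^ (α - 1) * g τ) ≤ s ^ (α - 1) * C1 := by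
      have step1 : (∫ τ in (0:ℝ)..s, (t - τ) ^ (α - 1) * g τ) ≤
          ∫ τ in (0:ℝ)..s, s ^ (α - 1) * g τ := by
        apply intervalIntegral.integral_mono_on hs0.le (hInt t 0 s le_rfl hs0.le hst)
          ((hgInt 0 s le_rfl hs0.le).const_mul _)
        intro x hx
        have hker_le : (t - x) ^ (α - 1) ≤ s ^ (α - 1) :=
          Real.rpow_le_rpow_of_nonpos hs0 (by linarith [hx.2]) (by linarith)
        exact mul_le_mul_of_nonneg_right hker_le (hnonneg x hx.1)
      have step2 : (∫ τ in (0:ℝ)..s, s ^ (α - 1) * g τ) = s ^ (α - 1) * ∫ τ in (0:ℝ)..s, g τ :=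
        intervalIntegral.integral_const_mul _ _
      have hgint_le : (∫ τ in (0:ℝ)..s, g τ) ≤ C1 := by
        have hsplitg : (∫ τ in (0:ℝ)..s, g τ) =
            (∫ τ in (0:ℝ)..T, g τ) + ∫ τ in T..s, g τ :=
          (intervalIntegral.integral_add_adjacent_intervals
            (hgInt 0 T le_rfl hT.le) (hgInt T s hT.le hsT)).symm
        have hA : (∫ τ in (0:ℝ)..T, g τ) ≤ M' * T := by
          have : (∫ τ in (0:ℝ)..T, g τ) ≤ ∫ _ in (0:ℝ)..T, M' :=
            intervalIntegral.integral_mono_on hT.le (hgInt 0 T le_rfl hT.le)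
              intervalIntegrable_const (fun x hx => hM' x hx.1)
          simpa [mul_comm] using this
        have hcont : IntervalIntegrable (fun τ : ℝ => sK * τ ^ (-l)) volume T s := by
          apply ContinuousOn.intervalIntegrable
          apply ContinuousOn.const_smul ?_ sK |>.congr (fun x hx => rfl)
          intro x hx
          rw [Set.uIcc_of_le hsT] at hx
          exact (Real.continuousAt_rpow_const x (-l)
            (Or.inl (by linarith [hx.1]))).continuousWithinAt
        have hBint : (∫ τ in T..s, g τ) ≤ ∫ τ in T..s, sK * τ ^ (-l) := by
          apply intervalIntegral.integral_mono_on hsT (hgInt T s hT.le hsT) hcont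
          intro x hx
          exact hgdec x hx.1
        have hval : (∫ τ in T..s, sK * τ ^ (-l)) ≤ sK * T ^ (1 - l) / (l - 1) := by
          rw [intervalIntegral.integral_const_mul]
          have hrpow : (∫ τ in T..s, τ ^ (-l)) =
              (s ^ (-l + 1) - T ^ (-l + 1)) / (-l + 1) := by
            apply integral_rpow
            right
            constructor
            · intro h; linarith
            · rw [Set.uIcc_of_le hsT]
              intro h
              exact absurd h.1 (by linarith)
          rw [hrpow]
          have h1l : -l + 1 = 1 - l := by ring
          rw [h1l]
          have hs_nonneg : 0 ≤ s ^ (1 - l) := Real.rpow_nonneg hs0.le _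
          have hT_nonneg : 0 ≤ T ^ (1 - l) := Real.rpow_nonneg hT.le _
          have key : (s ^ (1 - l) - T ^ (1 - l)) / (1 - l) ≤ T ^ (1 - l) / (l - 1) := by
            rw [show (s ^ (1 - l) - T ^ (1 - l)) / (1 - l)
                = (T ^ (1 - l) - s ^ (1 - l)) / (l - 1) by
              rw [div_eq_div_iff (by linarith) (by linarith)]; ring]
            gcongr
            · linarith
            · linarith
          calc sK * ((s ^ (1 - l) - T ^ (1 - l)) / (1 - l))
              ≤ sK * (T ^ (1 - l) / (l - 1)) := mul_le_mul_of_nonneg_left key hsK0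
            _ = sK * T ^ (1 - l) / (l - 1) := (mul_div_assoc _ _ _).symm
        calc (∫ τ in (0:ℝ)..s, g τ) = (∫ τ in (0:ℝ)..T, g τ) + ∫ τ in T..s, g τ := hsplitg
          _ ≤ M' * T + sK * T ^ (1 - l) / (l - 1) := add_le_add hA (hBint.trans hval)
      calc (∫ τ in (0:ℝ)..s, (t - τ) ^ (α - 1) * g τ)
          ≤ s ^ (α - 1) * ∫ τ in (0:ℝ)..s, g τ := by rw [← step2]; exact step1
        _ ≤ s ^ (α - 1) * C1 :=
            mul_le_mul_of_nonneg_left hgint_le (Real.rpow_nonneg hs0.le _)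
    -- bound the second piece
    have hb2 : (∫ τ in s..t, (t - τ) ^ (α - 1) * g τ) ≤ sK / α * s ^ (α - l) := by
      have step1 : (∫ τ in s..t, (t - τ) ^ (α - 1) * g τ) ≤
          ∫ τ in s..t, (t - τ) ^ (α - 1) * (sK * s ^ (-l)) := by
        apply intervalIntegral.integral_mono_on hst (hInt t s t hs0.le hst le_rfl)
          (((hker t).mono_set (by
            rw [Set.uIcc_of_le hst, Set.uIcc_of_le (hs0.le.trans hst)]
            exact Set.Icc_subset_Icc hs0.le le_rfl)).mul_const _)
        intro x hx
        have hker0 : 0 ≤ (t - x) ^ (α - 1) := Real.rpow_nonneg (by linarith [hx.2]) _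
        apply mul_le_mul_of_nonneg_left _ hker0
        calc g x ≤ sK * x ^ (-l) := hgdec x (hsT.trans hx.1)
          _ ≤ sK * s ^ (-l) := mul_le_mul_of_nonneg_left
              (Real.rpow_le_rpow_of_nonpos hs0 hx.1 (by linarith)) hsK0
      have step2 : (∫ τ in s..t, (t - τ) ^ (α - 1) * (sK * s ^ (-l))) =
          (sK * s ^ (-l)) * ∫ τ in s..t, (t - τ) ^ (α - 1) := by
        rw [intervalIntegral.integral_mul_const]; ring
      have step3 : (∫ τ in s..t, (t - τ) ^ (α - 1)) = s ^ α / α := by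
        rw [intervalIntegral.integral_comp_sub_left (fun x => x ^ (α - 1)) t]
        rw [sub_self, hts]
        rw [integral_rpow (Or.inl (by linarith))]
        rw [Real.zero_rpow (by linarith : α - 1 + 1 ≠ 0)]
        ring_nf
      calc (∫ τ in s..t, (t - τ) ^ (α - 1) * g τ)
          ≤ (sK * s ^ (-l)) * (s ^ α / α) := by rw [← step3, ← step2]; exact step1
        _ = sK / α * s ^ (α - l) := by
            rw [show α - l = -l + α by ring, Real.rpow_add hs0]
            ring
    calc (∫ τ in (0:ℝ)..s, (t - τ) ^ (α - 1) * g τ) + ∫ τ in s..t, (t - τ) ^ (α - 1) * g τ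
        ≤ s ^ (α - 1) * C1 + sK / α * s ^ (α - l) := add_le_add hb1 hb2
      _ = B t := rfl
  exact tendsto_of_tendsto_of_tendsto_of_le_of_le' tendsto_const_nhds hBtend hlow hup
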